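/- Let T = (A;B) be a 2×2×2 real tensor. If rank(T) ≤ 2 then Δ(T) ≥ 0. -/

import Mathlib

open Matrix BigOperators

/-- Cayley hyperdeterminant (up to sign) of a 2×2×2 tensor given by matrix slices A, B. -/
noncomputable def Delta {F : Type*} [Field F] (A B : Matrix (Fin 2) (Fin 2) F) : F :=
  ((A + B).det - (A - B).det) ^ 2 / 4 - 4 * A.det * B.det

/-- Rank of a 2×2×2 tensor, given as a pair of 2×2 matrix slices. -/
noncomputable def trank3 {F : Type*} [Field F] (T : Fin 2 → Matrix (Fin 2) (Fin 2) F) : ℕ :=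
  sInf {r | ∃ u v w : Fin r → Fin 2 → F, ∀ k i j, T k i j = ∑ s, u s k * v s i * w s j}

/-- Rank of a 2×2×2×2 tensor, given as a 2×2 array of 2×2 matrix slices. -/
noncomputable def trank4 {F : Type*} [Field F] (T : Fin 2 → Fin 2 → Matrix (Fin 2) (Fin 2) F) : ℕ :=
  sInf {r | ∃ u v w z : Fin r → Fin 2 → F,
    ∀ k l i j, T k l i j = ∑ s, u s k * v s l * w s i * z s j}

/-- The 2×2 matrix with columns u and v. -/
def col2 {F : Type*} [Field F] (u v : Fin 2 → F) : Matrix (Fin 2) (Fin 2) F :=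
  Matrix.of fun i j => ![u, v] j i

theorem stmt6 (A B : Matrix (Fin 2) (Fin 2) ℝ) (h : trank3 ![A, B] ≤ 2) :
    0 ≤ Delta A B := by
  set S : Set ℕ := {r | ∃ u v w : Fin r → Fin 2 → ℝ,
    ∀ k i j, (![A, B] : Fin 2 → Matrix (Fin 2) (Fin 2) ℝ) k i j = ∑ s, u s k * v s i * w s j}
    with hS
  have hne : S.Nonempty := by
    refine ⟨4, ![fun k => ![A,B] k 0 0, fun k => ![A,B] k 0 1,
                  fun k => ![A,B] k 1 0, fun k => ![A,B] k 1 1],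
              ![![1,0], ![1,0], ![0,1], ![0,1]],
              ![![1,0], ![0,1], ![1,0], ![0,1]], ?_⟩
    intro k i j
    fin_cases i <;> fin_cases j <;>
      norm_num [Fin.sum_univ_four, Matrix.cons_val_zero, Matrix.cons_val_one,
        Matrix.head_cons, Matrix.cons_val_fin_one, Matrix.vecHead, Matrix.vecTail, Function.comp,
          Matrix.cons_val_two, Matrix.cons_val_three]
  have hmem : sInf S ∈ S := Nat.sInf_mem hne
  have key : ∃ n, n ≤ 2 ∧ n ∈ S := ⟨sInf S, h, hmem⟩
  obtain ⟨n, hn2, u, v, w, hd⟩ := key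
  have hA : ∀ i j, A i j = ∑ s, u s 0 * v s i * w s j := by
    intro i j; simpa using hd 0 i j
  have hB : ∀ i j, B i j = ∑ s, u s 1 * v s i * w s j := by
    intro i j; simpa using hd 1 i j
  interval_cases n
  · simp only [Delta, Matrix.det_fin_two, Matrix.add_apply, Matrix.sub_apply, hA, hB,
      Fin.sum_univ_zero]
    norm_num
  · simp only [Delta, Matrix.det_fin_two, Matrix.add_apply, Matrix.sub_apply, hA, hB,
      Fin.sum_univ_one]
    nlinarith [sq_nonneg (0:ℝ)]
  · simp only [Delta, Matrix.det_fin_two, Matrix.add_apply, Matrix.sub_apply, hA, hB,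
      Fin.sum_univ_two]
    nlinarith [sq_nonneg ((v 0 0 * v 1 1 - v 0 1 * v 1 0) * (w 0 0 * w 1 1 - w 0 1 * w 1 0) *
      (u 0 0 * u 1 1 - u 0 1 * u 1 0))]
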